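/- Thrust-MRAC Lyapunov derivative: let b > 0, Γ_t > 0, let L_t be a 3×3 real matrix, and let e_v : ℝ → ℝ³, k̃_t : ℝ → ℝ, t_d : ℝ → ℝ³ be differentiable functions satisfying ė_v = −L_t e_v + b k̃_t t_d and k̃'_t = −Γ_t ⟪e_v, t_d⟫. Then the Lyapunov function V_t(t) = (1/2)⟪e_v(t), e_v(t)⟫ + (b/(2Γ_t)) k̃_t(t)² is differentiable with V̇_t(t) = −⟪e_v(t), L_t e_v(t)⟫ for every t; if moreover L_t is positive definite, then V̇_t(t) ≤ 0 for all t, with strict inequality whenever e_v(t) ≠ 0. -/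

import Mathlib

open Matrix

/-- Thrust-MRAC Lyapunov derivative: `V̇_t = -⟪e_v, L_t e_v⟫`, which is
nonpositive (negative when `e_v ≠ 0`) if `L_t` is positive definite. -/
theorem thrust_mrac_lyapunov_derivative
    (b Γt : ℝ) (hb : 0 < b) (hΓ : 0 < Γt)
    (Lt : Matrix (Fin 3) (Fin 3) ℝ)
    (e : ℝ → Fin 3 → ℝ) (kt : ℝ → ℝ) (td : ℝ → Fin 3 → ℝ)
    (htd : Differentiable ℝ td)
    (he : ∀ t, HasDerivAt e (-(Lt *ᵥ e t) + (b * kt t) • td t) t)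
    (hk : ∀ t, HasDerivAt kt (-(Γt * (e t ⬝ᵥ td t))) t)
    (V : ℝ → ℝ)
    (hV : V = fun t => (1 / 2) * (e t ⬝ᵥ e t) + (b / (2 * Γt)) * kt t ^ 2) :
    (∀ t, HasDerivAt V (-(e t ⬝ᵥ (Lt *ᵥ e t))) t) ∧
    ((∀ x : Fin 3 → ℝ, x ≠ 0 → 0 < x ⬝ᵥ (Lt *ᵥ x)) →
      ∀ t, deriv V t ≤ 0 ∧ (e t ≠ 0 → deriv V t < 0)) := by
  subst hV
  have key : ∀ t, HasDerivAt
      (fun t => (1 / 2) * (e t ⬝ᵥ e t) + (b / (2 * Γt)) * kt t ^ 2)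
      (-(e t ⬝ᵥ (Lt *ᵥ e t))) t := by
    intro t
    set v : Fin 3 → ℝ := -(Lt *ᵥ e t) + (b * kt t) • td t with hv
    have hei : ∀ i, HasDerivAt (fun s => e s i) (v i) t :=
      fun i => (hasDerivAt_pi.mp (he t)) i
    have h1 : HasDerivAt (fun s => e s ⬝ᵥ e s)
        (∑ i, (v i * e t i + e t i * v i)) t := by
      simp only [dotProduct]
      exact HasDerivAt.fun_sum fun i _ => (hei i).mul (hei i)
    have h2 : HasDerivAt (fun s => kt s ^ 2)
        ((2 : ℕ) * kt t ^ 1 * (-(Γt * (e t ⬝ᵥ td t)))) t := (hk t).pow 2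
    have hsum := (h1.const_mul ((1:ℝ)/2)).fun_add (h2.const_mul (b / (2 * Γt)))
    refine hsum.congr_deriv ?_
    have hs : ∑ i, (v i * e t i + e t i * v i) = 2 * (e t ⬝ᵥ v) := by
      simp only [dotProduct, Finset.mul_sum]
      congr 1; funext i; ring
    rw [hs, hv]
    have hdv : e t ⬝ᵥ (-(Lt *ᵥ e t) + (b * kt t) • td t)
        = -(e t ⬝ᵥ (Lt *ᵥ e t)) + (b * kt t) * (e t ⬝ᵥ td t) := by
      simp [dotProduct, Finset.mul_sum, Finset.sum_add_distrib, mul_add,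
        mul_comm, mul_left_comm, neg_add, Finset.sum_neg_distrib]
    rw [hdv]
    have hΓ' : (Γt : ℝ) ≠ 0 := ne_of_gt hΓ
    field_simp
    ring
  refine ⟨key, fun hpd t => ?_⟩
  have hd : deriv (fun t => (1 / 2) * (e t ⬝ᵥ e t) + (b / (2 * Γt)) * kt t ^ 2) t
      = -(e t ⬝ᵥ (Lt *ᵥ e t)) := (key t).deriv
  rw [hd]
  constructor
  · by_cases h : e t = 0
    · simp [h]
    · linarith [hpd (e t) h]
  · intro h
    linarith [hpd (e t) h]
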